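/- (Potential decrease for accelerated proximal gradient) Let f be convex and L-smooth, g proper closed convex, φ = f+g with minimizer x*. Let B_k > 0 be strictly increasing, b_0 = B_0, b_k = B_k − B_{k−1}, and a_k ≥ 0 with a_k ≤ (B_k − b_k²)/(2L) for k ≥ 1. Given x^0 = v^0, define for k ≥ 1: y^{k−1} = x^{k−1} − (1/L)G(x^{k−1}), v^k = v^{k−1} − (b_{k−1}/L)G(x^{k−1}), x^k = (B_{k−1}/B_k)y^{k−1} + (b_k/B_k)v^k, where G(·) := G(·, 1/L). Then the potential C_k := Σ_{i=0}^k a_i‖G(x^i)‖² + B_k(φ(y^k) − φ(x*)) satisfies C_k − C_{k−1} ≤ (L/2)(‖x* − v^k‖² − ‖x* − v^{k+1}‖²) for all k ≥ 1, with v^{k+1} := v^k − (b_k/L)G(x^k). -/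

import Mathlib

open scoped RealInnerProductSpace

/-- The proximal gradient mapping with step `1/L`: `G(z) = L(z - prox(z - (1/L)∇f z))`. -/
noncomputable def pgmL {E : Type*} [NormedAddCommGroup E] [InnerProductSpace ℝ E]
    (f' : E → E) (prox : E → E) (L : ℝ) (z : E) : E :=
  L • (z - prox (z - (1 / L) • f' z))


section Aux

variable {E : Type*} [NormedAddCommGroup E] [InnerProductSpace ℝ E] [CompleteSpace E]

lemma line_hasDerivAt (f : E → ℝ) (f' : E → E) (hdiff : ∀ x, HasGradientAt f (f' x) x)
    (x d : E) (t : ℝ) :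
    HasDerivAt (fun s : ℝ => f (x + s • d)) ⟪f' (x + t • d), d⟫ t := by
  have hline : HasDerivAt (fun s : ℝ => x + s • d) d t := by
    simpa using ((hasDerivAt_id t).smul_const d).const_add x
  have h := ((hdiff (x + t • d)).hasFDerivAt).comp_hasDerivAt t hline
  exact h

lemma convex_grad_ineq (f : E → ℝ) (f' : E → E)
    (hdiff : ∀ x, HasGradientAt f (f' x) x)
    (hconv : ConvexOn ℝ Set.univ f) (x u : E) :
    f x + ⟪f' x, u - x⟫ ≤ f u := by
  have hd : HasDerivAt (fun s : ℝ => f (x + s • (u - x))) ⟪f' x, u - x⟫ 0 := by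
    simpa using line_hasDerivAt f f' hdiff x (u - x) 0
  have hslope : Filter.Tendsto (slope (fun s : ℝ => f (x + s • (u - x))) 0)
      (nhdsWithin 0 (Set.Ioi 0)) (nhds ⟪f' x, u - x⟫) :=
    (hasDerivAt_iff_tendsto_slope.1 hd).mono_left
      (nhdsWithin_mono _ (fun t ht => ne_of_gt ht))
  have hbound : ∀ᶠ t in nhdsWithin (0:ℝ) (Set.Ioi 0),
      slope (fun s : ℝ => f (x + s • (u - x))) 0 t ≤ f u - f x := by
    filter_upwards [Ioc_mem_nhdsGT one_pos] with t ht
    have key : x + t • (u - x) = (1 - t) • x + t • u := by module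
    have h1 : f (x + t • (u - x)) ≤ (1 - t) * f x + t * f u := by
      rw [key]
      exact hconv.2 (Set.mem_univ x) (Set.mem_univ u)
        (by linarith [ht.2] : (0:ℝ) ≤ 1 - t) ht.1.le (by ring)
    have ht0 : (0:ℝ) < t := ht.1
    rw [slope_def_field, sub_zero, div_le_iff₀ ht0]
    simp only [zero_smul, add_zero]
    nlinarith [h1]
  have := le_of_tendsto hslope hbound
  linarith

lemma descent_lemma (f : E → ℝ) (f' : E → E) (L : ℝ) (hL : 0 < L)
    (hdiff : ∀ x, HasGradientAt f (f' x) x)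
    (hlip : ∀ x y, ‖f' x - f' y‖ ≤ L * ‖x - y‖) (x y : E) :
    f y ≤ f x + ⟪f' x, y - x⟫ + L / 2 * ‖y - x‖ ^ 2 := by
  set d := y - x with hd
  set q : ℝ → ℝ := fun t => f (x + t • d) - t * ⟪f' x, d⟫ - L / 2 * t ^ 2 * ‖d‖ ^ 2 with hq
  have hq' : ∀ t : ℝ, HasDerivAt q (⟪f' (x + t • d), d⟫ - ⟪f' x, d⟫ - L * t * ‖d‖ ^ 2) t := by
    intro t
    have h1 := line_hasDerivAt f f' hdiff x d t
    have h2 : HasDerivAt (fun t : ℝ => t * ⟪f' x, d⟫) ⟪f' x, d⟫ t := by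
      simpa using (hasDerivAt_id t).mul_const ⟪f' x, d⟫
    have h3 : HasDerivAt (fun t : ℝ => L / 2 * t ^ 2 * ‖d‖ ^ 2) (L * t * ‖d‖ ^ 2) t := by
      have := ((hasDerivAt_pow 2 t).const_mul (L / 2)).mul_const (‖d‖ ^ 2)
      exact this.congr_deriv (by ring)
    exact (h1.sub h2).sub h3
  have hanti : AntitoneOn q (Set.Icc 0 1) := by
    apply antitoneOn_of_deriv_nonpos (convex_Icc 0 1)
    · exact (fun t _ => ((hq' t).continuousAt.continuousWithinAt))
    · intro t ht
      exact ((hq' t).differentiableAt).differentiableWithinAt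
    · intro t ht
      rw [(hq' t).deriv]
      rw [interior_Icc] at ht
      have hip : ⟪f' (x + t • d) - f' x, d⟫ ≤ L * t * ‖d‖ ^ 2 := by
        calc ⟪f' (x + t • d) - f' x, d⟫ ≤ ‖f' (x + t • d) - f' x‖ * ‖d‖ :=
              real_inner_le_norm _ _
          _ ≤ (L * ‖(x + t • d) - x‖) * ‖d‖ :=
              mul_le_mul_of_nonneg_right (hlip _ _) (norm_nonneg _)
          _ = L * t * ‖d‖ ^ 2 := by
              rw [add_sub_cancel_left, norm_smul, Real.norm_eq_abs, abs_of_pos ht.1]; ring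
      rw [inner_sub_left] at hip
      linarith
  have h01 := hanti (Set.left_mem_Icc.2 zero_le_one) (Set.right_mem_Icc.2 zero_le_one) zero_le_one
  simp only [hq, zero_smul, add_zero, one_smul, zero_pow, one_pow] at h01
  have hxy : x + d = y := by simp [hd]
  rw [hxy] at h01
  nlinarith [h01]

lemma prox_subgrad (g : E → ℝ) (hg : ConvexOn ℝ Set.univ g) (L : ℝ) (hL : 0 < L)
    (c p : E)
    (hp : IsMinOn (fun z => g z + (1 / (2 * (1 / L))) * ‖z - c‖ ^ 2) Set.univ p)
    (u : E) : g p ≤ g u + L * ⟪p - c, u - p⟫ := by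
  have hcoef : (1 / (2 * (1 / L))) = L / 2 := by field_simp
  have hstep : ∀ t : ℝ, t ∈ Set.Ioc (0:ℝ) 1 →
      g p ≤ g u + L * ⟪p - c, u - p⟫ + L * t / 2 * ‖u - p‖ ^ 2 := by
    intro t ht
    have hmin := hp (Set.mem_univ (p + t • (u - p)))
    simp only [hcoef] at hmin
    have hgc : g (p + t • (u - p)) ≤ (1 - t) * g p + t * g u := by
      have key : p + t • (u - p) = (1 - t) • p + t • u := by module
      rw [key]
      exact hg.2 (Set.mem_univ p) (Set.mem_univ u)
        (by linarith [ht.2] : (0:ℝ) ≤ 1 - t) ht.1.le (by ring)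
    have hnorm : ‖p + t • (u - p) - c‖ ^ 2
        = ‖p - c‖ ^ 2 + 2 * (t * ⟪p - c, u - p⟫) + t ^ 2 * ‖u - p‖ ^ 2 := by
      have : p + t • (u - p) - c = (p - c) + t • (u - p) := by abel
      rw [this, norm_add_sq_real, real_inner_smul_right, norm_smul, Real.norm_eq_abs,
        mul_pow, sq_abs]
    simp only [Set.mem_setOf_eq, hnorm] at hmin
    have ht0 : (0:ℝ) < t := ht.1
    nlinarith [hmin, hgc]
  have hlim : Filter.Tendsto (fun t : ℝ => g u + L * ⟪p - c, u - p⟫ + L * t / 2 * ‖u - p‖ ^ 2)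
      (nhdsWithin 0 (Set.Ioi 0)) (nhds (g u + L * ⟪p - c, u - p⟫)) := by
    have hc : Continuous (fun t : ℝ => g u + L * ⟪p - c, u - p⟫ + L * t / 2 * ‖u - p‖ ^ 2) := by
      continuity
    have := (hc.tendsto 0).mono_left (nhdsWithin_le_nhds (s := Set.Ioi (0:ℝ)))
    simpa using this
  refine ge_of_tendsto hlim ?_
  filter_upwards [Ioc_mem_nhdsGT one_pos] with t ht
  exact hstep t ht

/-- The fundamental prox-grad inequality. -/
lemma key_ineq (f : E → ℝ) (f' : E → E) (g : E → ℝ) (L : ℝ) (hL : 0 < L)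
    (hdiff : ∀ x, HasGradientAt f (f' x) x)
    (hconv : ConvexOn ℝ Set.univ f)
    (hlip : ∀ x y, ‖f' x - f' y‖ ≤ L * ‖x - y‖)
    (hg : ConvexOn ℝ Set.univ g)
    (prox : E → E)
    (hprox : ∀ y : E, IsMinOn
      (fun z => g z + (1 / (2 * (1 / L))) * ‖z - y‖ ^ 2) Set.univ (prox y))
    (z u : E) :
    (1 / (2 * L)) * ‖pgmL f' prox L z‖ ^ 2 + ⟪pgmL f' prox L z, u - z⟫
      ≤ (f u + g u) - (f (z - (1 / L) • pgmL f' prox L z)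
          + g (z - (1 / L) • pgmL f' prox L z)) := by
  set c := z - (1 / L) • f' z with hc
  set p : E := prox c with hp
  set G : E := pgmL f' prox L z with hG
  have hLne : L ≠ 0 := ne_of_gt hL
  have hGp : G = L • (z - p) := rfl
  have hzp : z - (1 / L) • G = p := by
    rw [hGp, smul_smul, one_div, inv_mul_cancel₀ hLne, one_smul]; abel
  rw [hzp]
  -- the three ingredients
  have hA : f p ≤ f z + ⟪f' z, p - z⟫ + L / 2 * ‖p - z‖ ^ 2 :=
    descent_lemma f f' L hL hdiff hlip z p
  have hB : f z + ⟪f' z, u - z⟫ ≤ f u :=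
    convex_grad_ineq f f' hdiff hconv z u
  have hC : g p ≤ g u + L * ⟪p - c, u - p⟫ :=
    prox_subgrad g hg L hL c p (hprox c) u
  -- rewrite vectors in terms of G
  have hpz : p - z = -((1 / L) • G) := by
    rw [← hzp]; abel
  have hpc : p - c = (1 / L) • (f' z - G) := by
    rw [← hzp, hc, smul_sub]; abel
  have hup : u - p = (u - z) + (1 / L) • G := by
    rw [← hzp]; abel
  -- scalar computations
  have e1 : ⟪f' z, p - z⟫ = -(1 / L) * ⟪f' z, G⟫ := by
    rw [hpz, inner_neg_right, real_inner_smul_right]; ring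
  have e2 : L / 2 * ‖p - z‖ ^ 2 = 1 / (2 * L) * ‖G‖ ^ 2 := by
    rw [hpz, norm_neg, norm_smul, Real.norm_eq_abs, abs_of_pos (by positivity : (0:ℝ) < 1 / L),
      mul_pow]
    field_simp
  have e3 : L * ⟪p - c, u - p⟫
      = ⟪f' z, u - z⟫ + (1 / L) * ⟪f' z, G⟫ - ⟪G, u - z⟫ - (1 / L) * ‖G‖ ^ 2 := by
    rw [hpc, hup, real_inner_smul_left, inner_sub_left, inner_add_right, inner_add_right,
      real_inner_smul_right, real_inner_smul_right, real_inner_self_eq_norm_sq]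
    field_simp
    ring
  rw [e1, e2] at hA
  rw [e3] at hC
  have hLinv : 1 / (2 * L) * ‖G‖ ^ 2 - (1 / L) * ‖G‖ ^ 2 = -(1 / (2 * L)) * ‖G‖ ^ 2 := by
    field_simp; ring
  linarith [hA, hB, hC]

lemma aux_arith (c Bk Bm s Q1 Q2 P F1 F0 Fs aa S : ℝ)
    (k1' : (Bk - Bm) * (c * s + Q1) ≤ (Bk - Bm) * (Fs - F1))
    (k2' : Bm * (c * s + Q2) ≤ Bm * (F0 - F1))
    (hinner : Bm * Q2 + (Bk - Bm) * Q1 = (Bk - Bm) * P)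
    (hak' : aa * s ≤ Bk * c * s - (Bk - Bm) ^ 2 * c * s) :
    S + aa * s + Bk * (F1 - Fs) - (S + Bm * (F0 - Fs))
      ≤ -((Bk - Bm) * P) - (Bk - Bm) ^ 2 * c * s := by
  linarith

end Aux

/-- **Potential decrease for the accelerated proximal gradient scheme.** Under the scheme
`y^k = x^k - (1/L)G(x^k)`, `v^{k+1} = v^k - (b_k/L)G(x^k)`,
`x^{k+1} = (B_k/B_{k+1})y^k + (b_{k+1}/B_{k+1})v^{k+1}`, if `a_k ≤ (B_k - b_k²)/(2L)` for `k ≥ 1`,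
the potential `C_k = Σ_{i≤k} a_i‖G(x^i)‖² + B_k(φ(y^k) - φ(x*))` satisfies
`C_k - C_{k-1} ≤ (L/2)(‖x* - v^k‖² - ‖x* - v^{k+1}‖²)` for `k ≥ 1`. -/
theorem potential_decrease_accelerated_prox_grad
    {E : Type*} [NormedAddCommGroup E] [InnerProductSpace ℝ E] [FiniteDimensional ℝ E]
    (f : E → ℝ) (f' : E → E) (g : E → ℝ) (L : ℝ) (hL : 0 < L)
    (hdiff : ∀ x, HasGradientAt f (f' x) x)
    (hconv : ConvexOn ℝ Set.univ f)
    (hlip : ∀ x y, ‖f' x - f' y‖ ≤ L * ‖x - y‖)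
    (hg : ConvexOn ℝ Set.univ g)
    (prox : E → E)
    (hprox : ∀ y : E, IsMinOn
      (fun z => g z + (1 / (2 * (1 / L))) * ‖z - y‖ ^ 2) Set.univ (prox y))
    (xstar : E) (hmin : IsMinOn (fun z => f z + g z) Set.univ xstar)
    (B b a : ℕ → ℝ)
    (hBpos : ∀ k, 0 < B k) (hBmono : StrictMono B)
    (hb0 : b 0 = B 0) (hb : ∀ k, b (k + 1) = B (k + 1) - B k)
    (ha0 : ∀ k, 0 ≤ a k) (ha : ∀ k, 1 ≤ k → a k ≤ (B k - (b k) ^ 2) / (2 * L))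
    (x v y : ℕ → E) (hx0 : x 0 = v 0)
    (hy : ∀ k, y k = x k - (1 / L) • pgmL f' prox L (x k))
    (hv : ∀ k, v (k + 1) = v k - (b k / L) • pgmL f' prox L (x k))
    (hxk : ∀ k, x (k + 1) =
      (B k / B (k + 1)) • y k + (b (k + 1) / B (k + 1)) • v (k + 1)) :
    ∀ k : ℕ, 1 ≤ k →
      ((∑ i ∈ Finset.range (k + 1), a i * ‖pgmL f' prox L (x i)‖ ^ 2)
            + B k * ((f (y k) + g (y k)) - (f xstar + g xstar)))
        - ((∑ i ∈ Finset.range k, a i * ‖pgmL f' prox L (x i)‖ ^ 2)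
            + B (k - 1) * ((f (y (k - 1)) + g (y (k - 1))) - (f xstar + g xstar)))
        ≤ (L / 2) * (‖xstar - v k‖ ^ 2 - ‖xstar - v (k + 1)‖ ^ 2) := by
  intro k hk
  obtain ⟨m, rfl⟩ : ∃ m, k = m + 1 := ⟨k - 1, (Nat.succ_pred_eq_of_pos hk).symm⟩
  have hLne : L ≠ 0 := ne_of_gt hL
  set G : E := pgmL f' prox L (x (m + 1)) with hGdef
  -- key inequalities
  have hyk : x (m + 1) - (1 / L) • G = y (m + 1) := (hy (m + 1)).symm
  have key := fun u => key_ineq f f' g L hL hdiff hconv hlip hg prox hprox (x (m + 1)) u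
  simp only [← hGdef, hyk] at key
  have k1 := key xstar
  have k2 := key (y m)
  -- positivity facts
  have hbk : b (m + 1) = B (m + 1) - B m := hb m
  have hbkpos : 0 < b (m + 1) := by rw [hbk]; linarith [hBmono (Nat.lt_succ_self m)]
  have hBm : 0 < B m := hBpos m
  -- the vector identity: B_m (y_m - x_{k}) + b_k (x* - x_k) = b_k (x* - v_k)
  have hxrec : B (m + 1) • x (m + 1) = B m • y m + b (m + 1) • v (m + 1) := by
    rw [hxk m, smul_add, smul_smul, smul_smul,
      mul_div_cancel₀ _ (ne_of_gt (hBpos (m + 1))),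
      mul_div_cancel₀ _ (ne_of_gt (hBpos (m + 1)))]
  have hvec : B m • (y m - x (m + 1)) + b (m + 1) • (xstar - x (m + 1))
      = b (m + 1) • (xstar - v (m + 1)) := by
    rw [hbk] at hxrec ⊢
    linear_combination (norm := module) - hxrec
  -- inner product identity
  have hinner : B m * ⟪G, y m - x (m + 1)⟫ + b (m + 1) * ⟪G, xstar - x (m + 1)⟫
      = b (m + 1) * ⟪G, xstar - v (m + 1)⟫ := by
    rw [← real_inner_smul_right, ← real_inner_smul_right, ← real_inner_smul_right,
      ← inner_add_right, hvec]
  -- norm identity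
  have hnorm : ‖xstar - v (m + 1 + 1)‖ ^ 2 = ‖xstar - v (m + 1)‖ ^ 2
      + 2 * ((b (m + 1) / L) * ⟪G, xstar - v (m + 1)⟫)
      + (b (m + 1) / L) ^ 2 * ‖G‖ ^ 2 := by
    have hv' : xstar - v (m + 1 + 1) = (xstar - v (m + 1)) + (b (m + 1) / L) • G := by
      rw [hv (m + 1), ← hGdef]; abel
    rw [hv', norm_add_sq_real, real_inner_smul_right, norm_smul, Real.norm_eq_abs, mul_pow,
      sq_abs, real_inner_comm]
  -- sum telescoping
  rw [Finset.sum_range_succ, Nat.add_sub_cancel]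
  rw [show pgmL f' prox L (x (m + 1)) = G from rfl]
  -- scalar arithmetic
  have hsnn : (0:ℝ) ≤ ‖G‖ ^ 2 := by positivity
  have hak := ha (m + 1) (Nat.le_add_left 1 m)
  have hak' : a (m + 1) * ‖G‖ ^ 2 ≤ (B (m + 1) - b (m + 1) ^ 2) / (2 * L) * ‖G‖ ^ 2 :=
    mul_le_mul_of_nonneg_right hak hsnn
  have k1' := mul_le_mul_of_nonneg_left k1 hbkpos.le
  have k2' := mul_le_mul_of_nonneg_left k2 hBm.le
  have hRHS : (L / 2) * (‖xstar - v (m + 1)‖ ^ 2 - ‖xstar - v (m + 1 + 1)‖ ^ 2)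
      = -(b (m + 1) * ⟪G, xstar - v (m + 1)⟫) - b (m + 1) ^ 2 / (2 * L) * ‖G‖ ^ 2 := by
    rw [hnorm]; field_simp; ring
  rw [hRHS]
  have e1 : (B (m + 1) - b (m + 1) ^ 2) / (2 * L) * ‖G‖ ^ 2
      = B (m + 1) / (2 * L) * ‖G‖ ^ 2 - b (m + 1) ^ 2 / (2 * L) * ‖G‖ ^ 2 := by ring
  rw [e1] at hak'
  have hBsum : B m + b (m + 1) = B (m + 1) := by rw [hbk]; ring
  rw [hbk] at k1' hinner hak' ⊢
  have main := aux_arith (1 / (2 * L)) (B (m + 1)) (B m) (‖G‖ ^ 2)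
    ⟪G, xstar - x (m + 1)⟫ ⟪G, y m - x (m + 1)⟫ ⟪G, xstar - v (m + 1)⟫
    (f (y (m + 1)) + g (y (m + 1))) (f (y m) + g (y m)) (f xstar + g xstar)
    (a (m + 1)) (∑ i ∈ Finset.range (m + 1), a i * ‖pgmL f' prox L (x i)‖ ^ 2)
    (by linarith [k1']) (by linarith [k2']) hinner (by linear_combination hak')
  linear_combination main
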